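/- Let G be any simple graph on a finite vertex set and i a vertex of G. Then (G,i) allows the nullity pair (0,0) with the SNIP, and (G,i) allows the nullity pair (1,0) with the SNIP. -/

import Mathlib

open Matrix

/-- The nullity of a square real matrix: the dimension of its kernel. -/
noncomputable def nullity {V : Type*} [Fintype V] (A : Matrix V V ℝ) : ℕ :=
  Module.finrank ℝ (LinearMap.ker A.mulVecLin)

/-- The principal submatrix of `A` obtained by deleting row and column `i`. -/
def deleteRC {V : Type*} (A : Matrix V V ℝ) (i : V) :
    Matrix {v : V // v ≠ i} {v : V // v ≠ i} ℝ :=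
  A.submatrix (fun v => (v : V)) (fun v => (v : V))

/-- `A` has the `i`-strong nullity interlacing property. -/
def HasSNIP {V : Type*} [Fintype V] [DecidableEq V] (A : Matrix V V ℝ) (i : V) : Prop :=
  ∀ X : Matrix V V ℝ, X.IsSymm → A.hadamard X = 0 →
    (1 : Matrix V V ℝ).hadamard X = 0 →
    (∀ r, r ≠ i → ∀ c, (A * X) r c = 0) → X = 0

/-- `A` has the strong Arnold property. -/
def HasSAP {V : Type*} [Fintype V] [DecidableEq V] (A : Matrix V V ℝ) : Prop :=
  ∀ X : Matrix V V ℝ, X.IsSymm → A.hadamard X = 0 →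
    (1 : Matrix V V ℝ).hadamard X = 0 → A * X = 0 → X = 0

/-- `A` belongs to `𝒮(G)`. -/
def InSG {V : Type*} (G : SimpleGraph V) (A : Matrix V V ℝ) : Prop :=
  A.IsSymm ∧ ∀ u v : V, u ≠ v → (A u v ≠ 0 ↔ G.Adj u v)

/-- `(G,i)` allows the nullity pair `(k,l)`. -/
def Allows {V : Type*} [Fintype V] [DecidableEq V] (G : SimpleGraph V) (i : V)
    (k l : ℕ) : Prop :=
  ∃ A : Matrix V V ℝ, InSG G A ∧ nullity A = k ∧ nullity (deleteRC A i) = l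

/-- `(G,i)` allows the nullity pair `(k,l)` with the SNIP. -/
def AllowsSNIP {V : Type*} [Fintype V] [DecidableEq V] (G : SimpleGraph V) (i : V)
    (k l : ℕ) : Prop :=
  ∃ A : Matrix V V ℝ, InSG G A ∧ nullity A = k ∧ nullity (deleteRC A i) = l ∧ HasSNIP A i

section AuxLemmas

variable {V : Type*} [Fintype V] [DecidableEq V]

lemma sum_subtype_ne' {i : V} (f : V → ℝ) (hf : f i = 0) :
    ∑ v, f v = ∑ v : {v : V // v ≠ i}, f v := by
  rw [← Finset.sum_subtype (Finset.univ.erase i) (by simp) f,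
      Finset.sum_erase _ hf]

/-- The unified key hypothesis: the only vector `x` with `A x ∈ span(e_i)` and `x i = 0`
is `x = 0`. -/
def KeyHyp (A : Matrix V V ℝ) (i : V) : Prop :=
  ∀ (x : V → ℝ) (β : ℝ), A *ᵥ x = β • (Pi.single i 1 : V → ℝ) → x i = 0 → x = 0

lemma hasSNIP_of_keyHyp (A : Matrix V V ℝ) (i : V) (hsymm : A.IsSymm)
    (H2 : KeyHyp A i) : HasSNIP A i := by
  intro X hX _ hdiag hrows
  have hd : ∀ v, X v v = 0 := by
    intro v
    have := congrFun (congrFun hdiag v) v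
    simpa [Matrix.hadamard_apply, Matrix.one_apply] using this
  have hcol : ∀ c, X i c = 0 → (fun r => X r c) = 0 := by
    intro c hic
    refine H2 (fun r => X r c) ((A * X) i c) ?_ hic
    funext r
    by_cases hr : r = i
    · subst hr
      simp [Matrix.mulVec, dotProduct, Matrix.mul_apply, Pi.single_apply]
    · have h0 := hrows r hr c
      have h1 : (A *ᵥ fun r => X r c) r = (A * X) r c := by
        simp [Matrix.mulVec, dotProduct, Matrix.mul_apply]
      rw [h1, h0]
      simp [Pi.single_apply, hr]
  have hcoli := hcol i (hd i)
  ext r c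
  have hic : X i c = 0 := by
    have h1 : X c i = 0 := congrFun hcoli c
    calc X i c = Xᵀ c i := rfl
    _ = X c i := by rw [hX]
    _ = 0 := h1
  simpa using congrFun (hcol c hic) r

lemma nullity_deleteRC_of_keyHyp (A : Matrix V V ℝ) (i : V)
    (H2 : KeyHyp A i) : nullity (deleteRC A i) = 0 := by
  have hker : LinearMap.ker (deleteRC A i).mulVecLin = ⊥ := by
    rw [LinearMap.ker_eq_bot']
    intro y hy
    rw [mulVecLin_apply] at hy
    set x : V → ℝ := fun v => if h : v = i then 0 else y ⟨v, h⟩ with hxdef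
    have hxi : x i = 0 := by simp [hxdef]
    have hmain : A *ᵥ x = ((A *ᵥ x) i) • (Pi.single i 1 : V → ℝ) := by
      funext r
      by_cases hr : r = i
      · subst hr; simp [Pi.single_apply]
      · have h1 : (A *ᵥ x) r = ∑ v : {v : V // v ≠ i}, A r v * x v := by
          have : (A *ᵥ x) r = ∑ v, A r v * x v := by
            simp [Matrix.mulVec, dotProduct]
          rw [this]
          exact sum_subtype_ne' (fun v => A r v * x v) (by simp [hxdef])
        have h2 : ∑ v : {v : V // v ≠ i}, A r v * x v = (deleteRC A i *ᵥ y) ⟨r, hr⟩ := by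
          have : (deleteRC A i *ᵥ y) ⟨r, hr⟩ = ∑ v : {v : V // v ≠ i}, A r v * y v := by
            simp [deleteRC, Matrix.mulVec, dotProduct, Matrix.submatrix_apply]
          rw [this]
          refine Finset.sum_congr rfl fun v _ => ?_
          rw [hxdef]
          simp [dif_neg v.2]
        rw [h1, h2, hy]
        simp [Pi.single_apply, hr]
    have hx0 := H2 x _ hmain hxi
    funext c
    have hc := congrFun hx0 c.1
    rw [hxdef] at hc
    simpa [dif_neg c.2] using hc
  rw [nullity, hker]
  exact finrank_bot ℝ _

end AuxLemmas

/-- every rooted graph allows the nullity pairs `(0,0)` and `(1,0)` with the SNIP. -/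
theorem stmt9 {V : Type*} [Fintype V] [DecidableEq V] (G : SimpleGraph V) (i : V) :
    AllowsSNIP G i 0 0 ∧ AllowsSNIP G i 1 0 := by
  classical
  have hpsd := (SimpleGraph.posSemidef_lapMatrix ℝ G).dotProduct_mulVec_nonneg
  have hLnn : ∀ x : V → ℝ, 0 ≤ x ⬝ᵥ (G.lapMatrix ℝ *ᵥ x) := by
    intro x
    simpa using hpsd x
  constructor
  · -- nullity pair (0,0) : use lapMatrix + 1 (positive definite)
    set A : Matrix V V ℝ := G.lapMatrix ℝ + 1 with hAdef
    have hsymm : A.IsSymm := by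
      rw [Matrix.IsSymm, hAdef, transpose_add, transpose_one, G.isSymm_lapMatrix (R := ℝ)]
    have hquad : ∀ x : V → ℝ, x ⬝ᵥ (A *ᵥ x) = 0 → x = 0 := by
      intro x hx
      rw [hAdef, Matrix.add_mulVec, Matrix.one_mulVec, dotProduct_add] at hx
      have h1 := hLnn x
      have h2 : 0 ≤ x ⬝ᵥ x := Finset.sum_nonneg fun v _ => mul_self_nonneg _
      have h3 : x ⬝ᵥ x = 0 := by linarith
      exact dotProduct_self_eq_zero.mp h3
    have hH2 : KeyHyp A i := by
      intro x β hx hxi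
      apply hquad
      rw [hx]
      simp [dotProduct_smul, dotProduct_single, hxi]
    refine ⟨A, ⟨hsymm, ?_⟩, ?_, nullity_deleteRC_of_keyHyp A i hH2,
      hasSNIP_of_keyHyp A i hsymm hH2⟩
    · intro u v huv
      have : A u v = -(if G.Adj u v then (1:ℝ) else 0) := by
        simp [hAdef, SimpleGraph.lapMatrix, SimpleGraph.degMatrix,
          Matrix.add_apply, Matrix.sub_apply, Matrix.one_apply_ne huv,
          Matrix.diagonal_apply_ne _ huv]
      rw [this]
      by_cases h : G.Adj u v <;> simp [h]
    · have hker : LinearMap.ker A.mulVecLin = ⊥ := by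
        rw [LinearMap.ker_eq_bot']
        intro x hx
        rw [mulVecLin_apply] at hx
        apply hquad
        rw [hx, dotProduct_zero]
      rw [nullity, hker]
      exact finrank_bot ℝ _
  · -- nullity pair (1,0) : use lapMatrix + diagonal(indicator of non-reachable)
    set z : V → ℝ := fun v => if G.Reachable i v then 1 else 0 with hzdef
    set d : V → ℝ := fun v => if G.Reachable i v then 0 else 1 with hddef
    set A : Matrix V V ℝ := G.lapMatrix ℝ + Matrix.diagonal d with hAdef
    have hzi : z i = 1 := if_pos (SimpleGraph.Reachable.refl i)
    have hzne : z ≠ 0 := by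
      intro h
      have := congrFun h i
      rw [hzi] at this
      simpa using this
    have hsymm : A.IsSymm := by
      rw [Matrix.IsSymm, hAdef, transpose_add, Matrix.diagonal_transpose,
        G.isSymm_lapMatrix (R := ℝ)]
    have hLz : G.lapMatrix ℝ *ᵥ z = 0 := by
      have h := (G.lapMatrix_mulVec_eq_zero_iff_forall_reachable (x := z)).mpr ?_
      · exact h
      · intro u v huv
        show (if G.Reachable i u then (1:ℝ) else 0) = (if G.Reachable i v then (1:ℝ) else 0)
        by_cases h : G.Reachable i u
        · rw [if_pos h, if_pos (h.trans huv)]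
        · rw [if_neg h, if_neg (fun hv => h (hv.trans huv.symm))]
    have hAz : A *ᵥ z = 0 := by
      rw [hAdef, Matrix.add_mulVec, hLz, zero_add]
      funext v
      rw [Matrix.mulVec_diagonal]
      by_cases h : G.Reachable i v <;> simp [hzdef, hddef, h]
    have hker1 : ∀ x : V → ℝ, A *ᵥ x = 0 → x = x i • z := by
      intro x hx
      have hq : x ⬝ᵥ (A *ᵥ x) = 0 := by rw [hx, dotProduct_zero]
      rw [hAdef, Matrix.add_mulVec, dotProduct_add] at hq
      have hDval : x ⬝ᵥ (Matrix.diagonal d *ᵥ x) = ∑ v, d v * (x v * x v) := by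
        simp only [dotProduct, Matrix.mulVec_diagonal]
        refine Finset.sum_congr rfl fun v _ => by ring
      have hdnn : ∀ v, 0 ≤ d v := by
        intro v; by_cases h : G.Reachable i v <;> simp [hddef, h]
      have hD0 : 0 ≤ ∑ v, d v * (x v * x v) :=
        Finset.sum_nonneg fun v _ => mul_nonneg (hdnn v) (mul_self_nonneg _)
      have hL := hLnn x
      have hLzero : x ⬝ᵥ (G.lapMatrix ℝ *ᵥ x) = 0 := by
        rw [hDval] at hq; linarith
      have hDzero : ∑ v, d v * (x v * x v) = 0 := by
        rw [hDval] at hq; linarith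
      have hxzero : ∀ v, ¬ G.Reachable i v → x v = 0 := by
        intro v hv
        have := (Finset.sum_eq_zero_iff_of_nonneg
          (fun v _ => mul_nonneg (hdnn v) (mul_self_nonneg (x v)))).mp hDzero v
          (Finset.mem_univ v)
        simp only [hddef, if_neg hv, one_mul] at this
        exact mul_self_eq_zero.mp this
      have hconst : ∀ u v : V, G.Reachable u v → x u = x v := by
        have := (G.lapMatrix_toLinearMap₂'_apply'_eq_zero_iff_forall_reachable x).mp ?_
        · exact this
        · rw [Matrix.toLinearMap₂'_apply']
          exact hLzero
      funext v
      by_cases h : G.Reachable i v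
      · simp only [hzdef, Pi.smul_apply, if_pos h, smul_eq_mul, mul_one]
        exact (hconst i v h).symm
      · simp only [hzdef, Pi.smul_apply, if_neg h, smul_eq_mul, mul_zero]
        exact hxzero v h
    have hH2 : KeyHyp A i := by
      intro x β hx hxi
      have hβ : β = 0 := by
        have h1 : z ⬝ᵥ (A *ᵥ x) = β := by
          rw [hx]
          simp [dotProduct_smul, dotProduct_single, hzi]
        have h2 : z ⬝ᵥ (A *ᵥ x) = 0 := by
          rw [dotProduct_mulVec]
          have hzA : z ᵥ* A = 0 := by
            rw [← Matrix.mulVec_transpose, hsymm, hAz]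
          rw [hzA, zero_dotProduct]
        rw [h2] at h1
        exact h1.symm
      rw [hβ, zero_smul] at hx
      have hxz := hker1 x hx
      rw [hxi, zero_smul] at hxz
      exact hxz
    refine ⟨A, ⟨hsymm, ?_⟩, ?_, nullity_deleteRC_of_keyHyp A i hH2,
      hasSNIP_of_keyHyp A i hsymm hH2⟩
    · intro u v huv
      have : A u v = -(if G.Adj u v then (1:ℝ) else 0) := by
        simp [hAdef, SimpleGraph.lapMatrix, SimpleGraph.degMatrix,
          Matrix.add_apply, Matrix.sub_apply,
          Matrix.diagonal_apply_ne _ huv]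
      rw [this]
      by_cases h : G.Adj u v <;> simp [h]
    · have hker : LinearMap.ker A.mulVecLin = Submodule.span ℝ {z} := by
        apply le_antisymm
        · intro x hx
          rw [LinearMap.mem_ker, mulVecLin_apply] at hx
          rw [Submodule.mem_span_singleton]
          exact ⟨x i, (hker1 x hx).symm⟩
        · rw [Submodule.span_le, Set.singleton_subset_iff]
          rw [SetLike.mem_coe, LinearMap.mem_ker, mulVecLin_apply]
          exact hAz
      rw [nullity, hker]
      exact finrank_span_singleton hzne
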